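/- Let λ be a positive root and s ∈ B with λ ≠ α_s and ⟨λ, α_s⟩ > 0. Then ρ(s) λ is a positive root and δ(ρ(s) λ) < δ(λ). -/

import Mathlib

open Real

variable {B : Type*}

/-- The pairing constant `⟨α_s, α_t⟩` of the standard bilinear form:
`-cos (π / M s t)` if `M s t ≠ 0`, and `-1` if `M s t = 0` (i.e. `m_{s,t} = ∞`). -/
noncomputable def pairing (M : CoxeterMatrix B) (s t : B) : ℝ :=
  if M s t = 0 then -1 else -Real.cos (Real.pi / (M s t : ℝ))

/-- The standard symmetric bilinear form on `V = B → ℝ`. -/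
noncomputable def form [Fintype B] (M : CoxeterMatrix B) (v w : B → ℝ) : ℝ :=
  ∑ s, ∑ t, v s * w t * pairing M s t

/-- The simple root `α_s`, i.e. the standard basis vector at `s`. -/
noncomputable def sroot [DecidableEq B] (s : B) : B → ℝ := Pi.single s 1

/-- `λ` is a root: `λ = ρ(w) α_s` for some `w ∈ W`, `s ∈ B`. -/
def IsRoot [DecidableEq B] (M : CoxeterMatrix B)
    (ρ : M.Group →* Module.End ℝ (B → ℝ)) (lam : B → ℝ) : Prop :=
  ∃ (w : M.Group) (s : B), ρ w (sroot s) = lam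

/-- `λ` is positive: all coordinates are nonnegative. -/
def IsPos (lam : B → ℝ) : Prop := ∀ s, 0 ≤ lam s

/-- `λ` is negative: all coordinates are nonpositive. -/
def IsNeg (lam : B → ℝ) : Prop := ∀ s, lam s ≤ 0

/-- `λ` is a positive root. -/
def IsPosRoot [DecidableEq B] (M : CoxeterMatrix B)
    (ρ : M.Group →* Module.End ℝ (B → ℝ)) (lam : B → ℝ) : Prop :=
  IsRoot M ρ lam ∧ IsPos lam

/-- `λ` dominates `μ`: for every `w ∈ W`, if `ρ(w) μ` is positive then so is `ρ(w) λ`. -/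
def Dominates (M : CoxeterMatrix B)
    (ρ : M.Group →* Module.End ℝ (B → ℝ)) (lam mu : B → ℝ) : Prop :=
  ∀ w : M.Group, IsPos (ρ w mu) → IsPos (ρ w lam)

/-- `λ` is a minimal root: a positive root dominating no positive root other than itself. -/
def IsMinimal [DecidableEq B] (M : CoxeterMatrix B)
    (ρ : M.Group →* Module.End ℝ (B → ℝ)) (lam : B → ℝ) : Prop :=
  IsPosRoot M ρ lam ∧
    ∀ mu, IsPosRoot M ρ mu → Dominates M ρ lam mu → mu = lam

/-- The depth `δ(λ)` of a positive root:
the least Coxeter length of a `w ∈ W` with `ρ(w⁻¹) λ` negative. -/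
noncomputable def depth (M : CoxeterMatrix B)
    (ρ : M.Group →* Module.End ℝ (B → ℝ)) (lam : B → ℝ) : ℕ :=
  sInf {n | ∃ w : M.Group, IsNeg (ρ w⁻¹ lam) ∧ M.toCoxeterSystem.length w = n}

/-- The partial order `λ ⪯ μ` on positive roots:
`μ = ρ(w) λ` for some `w` with `δ(μ) = ℓ(w) + δ(λ)`. -/
def PLE (M : CoxeterMatrix B)
    (ρ : M.Group →* Module.End ℝ (B → ℝ)) (lam mu : B → ℝ) : Prop :=
  ∃ w : M.Group, mu = ρ w lam ∧
    depth M ρ mu = M.toCoxeterSystem.length w + depth M ρ lam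

/-- The Coxeter graph of `M`: distinct `s`, `t` are adjacent iff `M s t ≥ 3` or `M s t = 0`. -/
def coxGraph (M : CoxeterMatrix B) : SimpleGraph B where
  Adj s t := s ≠ t ∧ (M s t = 0 ∨ 3 ≤ M s t)
  symm := by
    constructor
    intro s t h
    beta_reduce at h ⊢
    exact ⟨h.1.symm, by rw [M.symmetric t s]; exact h.2⟩
  loopless := by constructor; intro s h; exact h.1 rfl

/-- The support of a vector `λ ∈ V`. -/
def supp (lam : B → ℝ) : Set B := {s | lam s ≠ 0}

/-! ### Auxiliary development -/

set_option linter.unusedSectionVars false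
set_option linter.deprecated false

namespace Aux

open CoxeterSystem List

variable [DecidableEq B] [Fintype B] (M : CoxeterMatrix B)

theorem pairing_comm (s t : B) : pairing M s t = pairing M t s := by
  unfold pairing; rw [M.symmetric]

theorem pairing_self (s : B) : pairing M s s = 1 := by
  unfold pairing
  rw [M.diagonal]
  norm_num

theorem pairing_nonpos {s t : B} (h : s ≠ t) : pairing M s t ≤ 0 := by
  unfold pairing
  split
  · norm_num
  · rename_i h0
    have h1 : M s t ≠ 1 := M.off_diagonal s t h
    have h2 : 2 ≤ M s t := by omega
    have hm2 : (2:ℝ) ≤ (M s t : ℝ) := by exact_mod_cast h2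
    have hpi := Real.pi_pos
    have hd : (0:ℝ) < (M s t : ℝ) := by linarith
    have : (0:ℝ) ≤ Real.cos (Real.pi / (M s t : ℝ)) := by
      apply Real.cos_nonneg_of_mem_Icc
      constructor
      · have : (0:ℝ) ≤ Real.pi / (M s t : ℝ) := by positivity
        linarith
      · rw [div_le_iff₀ hd]
        nlinarith
    linarith

theorem form_comm (v w : B → ℝ) : form M v w = form M w v := by
  unfold form
  rw [Finset.sum_comm]
  congr 1; ext t; congr 1; ext s
  rw [pairing_comm]; ring

theorem form_add_left (u v w : B → ℝ) : form M (u + v) w = form M u w + form M v w := by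
  unfold form
  rw [← Finset.sum_add_distrib]
  congr 1; ext s
  rw [← Finset.sum_add_distrib]
  congr 1; ext t
  simp only [Pi.add_apply]; ring

theorem form_smul_left (c : ℝ) (v w : B → ℝ) : form M (c • v) w = c * form M v w := by
  unfold form
  rw [Finset.mul_sum]
  congr 1; ext s
  rw [Finset.mul_sum]
  congr 1; ext t
  simp only [Pi.smul_apply, smul_eq_mul]; ring

theorem form_smul_right (c : ℝ) (v w : B → ℝ) : form M v (c • w) = c * form M v w := by
  rw [form_comm, form_smul_left, form_comm]

theorem form_sub_left (u v w : B → ℝ) : form M (u - v) w = form M u w - form M v w := by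
  have := form_add_left M (u - v) v w
  rw [sub_add_cancel] at this
  linarith

theorem form_sub_right (u v w : B → ℝ) : form M u (v - w) = form M u v - form M u w := by
  rw [form_comm, form_sub_left, form_comm M v u, form_comm M w u]

theorem form_sroot_right (v : B → ℝ) (t : B) :
    form M v (sroot t) = ∑ s, v s * pairing M s t := by
  unfold form sroot
  congr 1; ext s
  rw [Finset.sum_eq_single t]
  · simp
  · intro b _ hb
    simp [Pi.single_apply, hb]
  · intro h; exact absurd (Finset.mem_univ t) h

theorem form_sroot_left (v : B → ℝ) (s : B) :
    form M (sroot s) v = ∑ t, v t * pairing M s t := by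
  rw [form_comm, form_sroot_right]
  congr 1; ext t; rw [pairing_comm]

theorem form_sroot_sroot (s t : B) : form M (sroot s) (sroot t) = pairing M s t := by
  rw [form_sroot_right]
  rw [Finset.sum_eq_single s]
  · simp [sroot]
  · intro b _ hb
    simp [sroot, Pi.single_apply, hb]
  · intro h; exact absurd (Finset.mem_univ s) h

theorem form_zero_zero : form M 0 0 = 0 := by
  unfold form; simp

theorem sroot_nonneg (s q : B) : 0 ≤ sroot s q := by
  unfold sroot
  rcases eq_or_ne q s with rfl | h
  · simp
  · simp [Pi.single_apply, h.symm]
  -- fallback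

end Aux

namespace Aux

variable [DecidableEq B] [Fintype B] (M : CoxeterMatrix B)
  (ρ : M.Group →* Module.End ℝ (B → ℝ))
  (hρ : ∀ (s : B) (v : B → ℝ),
      ρ (M.simple s) v = v - (2 * form M v (sroot s)) • sroot s)

local notation "cs" => CoxeterMatrix.toCoxeterSystem M
local prefix:100 "ℓ" => CoxeterSystem.length (CoxeterMatrix.toCoxeterSystem M)
local prefix:100 "π" => CoxeterSystem.wordProd (CoxeterMatrix.toCoxeterSystem M)

theorem cs_simple (i : B) : (CoxeterMatrix.toCoxeterSystem M).simple i = M.simple i := rfl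

theorem rho_one (v : B → ℝ) : ρ 1 v = v := by rw [map_one]; rfl

theorem rho_mul (u w : M.Group) (v : B → ℝ) : ρ (u * w) v = ρ u (ρ w v) := by
  rw [map_mul]; rfl

theorem isNeg_neg {lam : B → ℝ} (h : IsPos lam) : IsNeg (-lam) := fun s => by
  simpa using h s

theorem isPos_neg {lam : B → ℝ} (h : IsNeg lam) : IsPos (-lam) := fun s => by
  simpa using h s

theorem eq_zero_of_isPos_isNeg {lam : B → ℝ} (h1 : IsPos lam) (h2 : IsNeg lam) : lam = 0 :=
  funext fun s => le_antisymm (h2 s) (h1 s)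

include hρ

theorem rho_simple_sroot (s : B) : ρ (M.simple s) (sroot s) = -sroot s := by
  rw [hρ, form_sroot_sroot, pairing_self]
  module

theorem rho_simple_simple (s : B) (v : B → ℝ) : ρ (M.simple s) (ρ (M.simple s) v) = v := by
  rw [← rho_mul M ρ, ← cs_simple M, (CoxeterMatrix.toCoxeterSystem M).simple_mul_simple_self s,
    rho_one M ρ]

theorem form_rho_simple (s : B) (v w : B → ℝ) :
    form M (ρ (M.simple s) v) (ρ (M.simple s) w) = form M v w := by
  rw [hρ, hρ, form_sub_left, form_sub_right, form_sub_right, form_smul_left, form_smul_right,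
    form_smul_left, form_smul_right, form_sroot_sroot, pairing_self]
  simp only [form_comm M (sroot s)]
  ring

theorem form_rho (w : M.Group) (v v' : B → ℝ) :
    form M (ρ w v) (ρ w v') = form M v v' := by
  obtain ⟨ω, rfl⟩ := (CoxeterMatrix.toCoxeterSystem M).wordProd_surjective w
  induction ω generalizing v v' with
  | nil => rw [CoxeterSystem.wordProd_nil, rho_one M ρ, rho_one M ρ]
  | cons i ω ih =>
      rw [CoxeterSystem.wordProd_cons, rho_mul M ρ, rho_mul M ρ, cs_simple M, form_rho_simple M ρ hρ, ih]

theorem root_norm {lam : B → ℝ} (h : IsRoot M ρ lam) : form M lam lam = 1 := by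
  obtain ⟨w, i, rfl⟩ := h
  rw [form_rho M ρ hρ, form_sroot_sroot, pairing_self]

theorem root_ne_zero {lam : B → ℝ} (h : IsRoot M ρ lam) : lam ≠ 0 := by
  intro h0
  have := root_norm M ρ hρ h
  rw [h0, form_zero_zero] at this
  norm_num at this

theorem isRoot_rho {lam : B → ℝ} (u : M.Group) (h : IsRoot M ρ lam) :
    IsRoot M ρ (ρ u lam) := by
  obtain ⟨w, i, rfl⟩ := h
  exact ⟨u * w, i, by rw [rho_mul M ρ]⟩

theorem not_isNeg_of_isPos_root {lam : B → ℝ} (hr : IsRoot M ρ lam) (h1 : IsPos lam) :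
    ¬IsNeg lam := fun h2 =>
  root_ne_zero M ρ hρ hr (eq_zero_of_isPos_isNeg h1 h2)

end Aux

namespace Aux

noncomputable def cheb (c : ℝ) : ℕ → ℝ
  | 0 => 0
  | 1 => 1
  | (n+2) => 2*c*cheb c (n+1) - cheb c n

theorem cheb_zero (c : ℝ) : cheb c 0 = 0 := rfl
theorem cheb_one' (c : ℝ) : cheb c 1 = 1 := rfl
theorem cheb_succ_succ (c : ℝ) (n : ℕ) : cheb c (n+2) = 2*c*cheb c (n+1) - cheb c n := rfl

theorem cheb_one_eq (k : ℕ) : cheb 1 k = k := by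
  induction k using Nat.strong_induction_on with
  | _ k ih =>
    match k with
    | 0 => norm_num [cheb]
    | 1 => norm_num [cheb]
    | (n+2) =>
      rw [cheb_succ_succ, ih (n+1) (by omega), ih n (by omega)]
      push_cast; ring

theorem cheb_sin_eq {m : ℕ} (hm : 2 ≤ m) (k : ℕ) :
    cheb (Real.cos (Real.pi / m)) k
      = Real.sin (k * (Real.pi / m)) / Real.sin (Real.pi / m) := by
  have hm' : (2:ℝ) ≤ (m:ℝ) := by exact_mod_cast hm
  have hpi := Real.pi_pos
  set θ := Real.pi / (m:ℝ) with hθ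
  have hθpos : 0 < θ := by positivity
  have hθlt : θ < Real.pi := by
    rw [hθ, div_lt_iff₀ (by linarith)]
    nlinarith
  have hsin : 0 < Real.sin θ := Real.sin_pos_of_pos_of_lt_pi hθpos hθlt
  induction k using Nat.strong_induction_on with
  | _ k ih =>
    match k with
    | 0 => simp [cheb]
    | 1 => simp [cheb, div_self (ne_of_gt hsin)]
    | (n+2) =>
      rw [cheb_succ_succ, ih (n+1) (by omega), ih n (by omega)]
      have key : Real.sin ((n+2 : ℕ) * θ)
          = 2 * Real.cos θ * Real.sin ((n+1 : ℕ) * θ) - Real.sin ((n:ℕ) * θ) := by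
        have e1 : ((n+2:ℕ) : ℝ) * θ = ((n+1:ℕ):ℝ) * θ + θ := by push_cast; ring
        have e2 : ((n:ℕ) : ℝ) * θ = ((n+1:ℕ):ℝ) * θ - θ := by push_cast; ring
        rw [e1, e2, Real.sin_add, Real.sin_sub]
        ring
      rw [key]
      field_simp

theorem cheb_nonneg_of_le {m : ℕ} (hm : 2 ≤ m) {k : ℕ} (hk : k ≤ m) :
    0 ≤ cheb (Real.cos (Real.pi / m)) k := by
  rw [cheb_sin_eq hm]
  have hm' : (2:ℝ) ≤ (m:ℝ) := by exact_mod_cast hm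
  have hpi := Real.pi_pos
  have hθpos : 0 < Real.pi / m := by positivity
  have hθlt : Real.pi / m < Real.pi := by
    rw [div_lt_iff₀ (by linarith)]; nlinarith
  have hsin : 0 < Real.sin (Real.pi / m) := Real.sin_pos_of_pos_of_lt_pi hθpos hθlt
  apply div_nonneg _ (le_of_lt hsin)
  apply Real.sin_nonneg_of_nonneg_of_le_pi
  · positivity
  · have : (k:ℝ) ≤ (m:ℝ) := by exact_mod_cast hk
    calc (k:ℝ) * (Real.pi / m) ≤ (m:ℝ) * (Real.pi / m) := by
          apply mul_le_mul_of_nonneg_right this (le_of_lt hθpos)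
      _ = Real.pi := by field_simp

end Aux

namespace Aux

open CoxeterSystem

variable [DecidableEq B] [Fintype B] (M : CoxeterMatrix B)
  (ρ : M.Group →* Module.End ℝ (B → ℝ))
  (hρ : ∀ (s : B) (v : B → ℝ),
      ρ (M.simple s) v = v - (2 * form M v (sroot s)) • sroot s)

local prefix:100 "ℓ" => CoxeterSystem.length (CoxeterMatrix.toCoxeterSystem M)
local prefix:100 "π" => CoxeterSystem.wordProd (CoxeterMatrix.toCoxeterSystem M)

include hρ

theorem sigma_pair_s (s t : B) (x y : ℝ) :
    ρ (M.simple s) (x • sroot s + y • sroot t)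
      = (2*(-pairing M s t)*y - x) • sroot s + y • sroot t := by
  have hf : form M (x • sroot s + y • sroot t) (sroot s) = x + y * pairing M s t := by
    rw [form_add_left, form_smul_left, form_smul_left, form_sroot_sroot, form_sroot_sroot,
      pairing_self, pairing_comm M t s]
    ring
  rw [hρ, hf]
  module

theorem sigma_pair_t (s t : B) (x y : ℝ) :
    ρ (M.simple t) (x • sroot s + y • sroot t)
      = x • sroot s + (2*(-pairing M s t)*x - y) • sroot t := by
  have hf : form M (x • sroot s + y • sroot t) (sroot t) = x * pairing M s t + y := by
    rw [form_add_left, form_smul_left, form_smul_left, form_sroot_sroot, form_sroot_sroot,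
      pairing_self]
    ring
  rw [hρ, hf]
  module

theorem v_formula (s t : B) (n : ℕ) :
    ρ (π (alternatingWord s t n)) (sroot s)
      = (if Even n then cheb (-pairing M s t) (n+1) else cheb (-pairing M s t) n) • sroot s
        + (if Even n then cheb (-pairing M s t) n else cheb (-pairing M s t) (n+1)) • sroot t := by
  set c := -pairing M s t with hc
  induction n with
  | zero =>
      simp only [alternatingWord, wordProd_nil, rho_one M ρ, if_pos (Even.zero)]
      rw [cheb_zero, cheb_one']
      module
  | succ n ih =>
      rw [alternatingWord_succ', wordProd_cons, rho_mul M ρ, ih]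
      rcases Nat.even_or_odd n with he | ho
      · rw [if_pos he, if_pos he, if_pos he, cs_simple M]
        rw [sigma_pair_t M ρ hρ s t]
        have : ¬ Even (n+1) := by simp [Nat.even_add_one, he]
        rw [if_neg this, if_neg this, cheb_succ_succ]
      · have he' : ¬ Even n := Nat.not_even_iff_odd.mpr ho
        rw [if_neg he', if_neg he', if_neg he', cs_simple M]
        rw [sigma_pair_s M ρ hρ s t]
        have : Even (n+1) := Nat.even_add_one.mpr he'
        rw [if_pos this, if_pos this, cheb_succ_succ]

theorem rank_two {s t : B} (hst : s ≠ t) (n : ℕ)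
    (hred : ℓ (π (alternatingWord s t n) * M.simple s) = n + 1) :
    ∃ x y : ℝ, 0 ≤ x ∧ 0 ≤ y ∧
      ρ (π (alternatingWord s t n)) (sroot s) = x • sroot s + y • sroot t := by
  have hv := v_formula M ρ hρ s t n
  rcases eq_or_ne (M s t) 0 with h0 | h0
  · have hc : -pairing M s t = 1 := by unfold pairing; rw [if_pos h0]; norm_num
    rw [hc] at hv
    rcases Nat.even_or_odd n with he | ho
    · rw [if_pos he, if_pos he] at hv
      exact ⟨_, _, by rw [cheb_one_eq]; positivity, by rw [cheb_one_eq]; positivity, hv⟩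
    · rw [if_neg (Nat.not_even_iff_odd.mpr ho), if_neg (Nat.not_even_iff_odd.mpr ho)] at hv
      exact ⟨_, _, by rw [cheb_one_eq]; positivity, by rw [cheb_one_eq]; positivity, hv⟩
  · have h1 : M s t ≠ 1 := M.off_diagonal s t hst
    have hm : 2 ≤ M s t := by omega
    have hc : -pairing M s t = Real.cos (Real.pi / (M s t : ℝ)) := by
      unfold pairing; rw [if_neg h0]; ring
    have hn1 : n + 1 ≤ M s t := by
      by_contra hgt
      push_neg at hgt
      have hsymm : M t s = M s t := M.symmetric t s
      have hir : (CoxeterMatrix.toCoxeterSystem M).IsReduced (alternatingWord t s (n+1)) := by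
        unfold CoxeterSystem.IsReduced
        rw [alternatingWord_succ, wordProd_concat, cs_simple M]
        simp only [List.length_concat, length_alternatingWord]
        exact hred
      exact (CoxeterMatrix.toCoxeterSystem M).not_isReduced_alternatingWord t s
        (by omega) (by omega) hir
    rw [hc] at hv
    have hk1 : 0 ≤ cheb (Real.cos (Real.pi / (M s t : ℝ))) n :=
      cheb_nonneg_of_le hm (by omega)
    have hk2 : 0 ≤ cheb (Real.cos (Real.pi / (M s t : ℝ))) (n+1) :=
      cheb_nonneg_of_le hm (by omega)
    rcases Nat.even_or_odd n with he | ho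
    · rw [if_pos he, if_pos he] at hv
      exact ⟨_, _, hk2, hk1, hv⟩
    · rw [if_neg (Nat.not_even_iff_odd.mpr ho), if_neg (Nat.not_even_iff_odd.mpr ho)] at hv
      exact ⟨_, _, hk1, hk2, hv⟩

end Aux

namespace Aux

open CoxeterSystem

variable [DecidableEq B] [Fintype B] (M : CoxeterMatrix B)
  (ρ : M.Group →* Module.End ℝ (B → ℝ))
  (hρ : ∀ (s : B) (v : B → ℝ),
      ρ (M.simple s) v = v - (2 * form M v (sroot s)) • sroot s)

local prefix:100 "ℓ" => CoxeterSystem.length (CoxeterMatrix.toCoxeterSystem M)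
local prefix:100 "π" => CoxeterSystem.wordProd (CoxeterMatrix.toCoxeterSystem M)

theorem alternatingWord_one (x r : B) : alternatingWord x r 1 = [r] := by
  rw [alternatingWord_succ]
  rfl

theorem dec {s t : B} (hst : s ≠ t) (w : M.Group) :
    ∀ k (a : M.Group) (x y : B) (n : ℕ),
      ((x, y) = (s, t) ∨ (x, y) = (t, s)) →
      a * π (alternatingWord x y n) = w →
      ℓ w = ℓ a + n → ℓ a = k →
      ∃ (b : M.Group) (x' y' : B) (m : ℕ),
        ((x', y') = (s, t) ∨ (x', y') = (t, s)) ∧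
        b * π (alternatingWord x' y' m) = w ∧
        ℓ w = ℓ b + m ∧
        ℓ (b * M.simple s) = ℓ b + 1 ∧ ℓ (b * M.simple t) = ℓ b + 1 := by
  intro k
  induction k using Nat.strong_induction_on with
  | _ k ih =>
    intro a x y n hxy hw hlen hk
    have hxyne : x ≠ y := by
      rcases hxy with h | h <;> (injection h with h1 h2; rw [h1, h2]) <;>
        [exact hst; exact hst.symm]
    by_cases hds : ℓ (a * M.simple s) = ℓ a + 1 ∧ ℓ (a * M.simple t) = ℓ a + 1
    · exact ⟨a, x, y, n, hxy, hw, hlen, hds.1, hds.2⟩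
    · -- there is a descent r ∈ {s, t} of a
      have hdesc : ∃ r, (r = s ∨ r = t) ∧ ℓ (a * M.simple r) + 1 = ℓ a := by
        rcases (CoxeterMatrix.toCoxeterSystem M).length_mul_simple a s with h1 | h1
        · rcases (CoxeterMatrix.toCoxeterSystem M).length_mul_simple a t with h2 | h2
          · rw [cs_simple M] at h1 h2
            exact absurd ⟨h1, h2⟩ hds
          · exact ⟨t, Or.inr rfl, by rw [← cs_simple M]; exact h2⟩
        · exact ⟨s, Or.inl rfl, by rw [← cs_simple M]; exact h1⟩
      obtain ⟨r, hrmem, hr⟩ := hdesc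
      set a' := a * M.simple r with ha'
      have haa : a = a' * M.simple r := by
        rw [ha', ← cs_simple M, (CoxeterMatrix.toCoxeterSystem M).simple_mul_simple_cancel_right]
      have hla : ℓ a = ℓ a' + 1 := by omega
      rcases Nat.eq_zero_or_pos n with rfl | hn
      · -- n = 0 : start an alternating word [r]
        have hw' : a = w := by simpa [alternatingWord] using hw
        have hmem' : ((if r = s then t else s, r) = (s, t) ∨ (if r = s then t else s, r) = (t, s)) := by
          rcases hrmem with rfl | rfl
          · simp
          · simp [Ne.symm hst, hst]
        refine ih (ℓ a') (by omega) a' (if r = s then t else s) r 1 hmem' ?_ ?_ rfl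
        · rw [alternatingWord_one, wordProd_singleton, cs_simple M, ← haa, hw']
        · omega
      · -- n ≥ 1
        obtain ⟨n0, rfl⟩ : ∃ n0, n = n0 + 1 := ⟨n - 1, by omega⟩
        -- head of the current word
        have hword : alternatingWord x y (n0 + 1)
            = (if Even n0 then y else x) :: alternatingWord x y n0 := alternatingWord_succ' x y n0
        by_cases hrF : r = (if Even n0 then y else x)
        · -- descent letter is the head of the word: contradiction
          exfalso
          have : w = a' * π (alternatingWord x y n0) := by
            rw [← hw, hword, wordProd_cons, cs_simple M, ← hrF, ← mul_assoc, ← ha']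
          have h1 : ℓ w ≤ ℓ a' + ℓ (π (alternatingWord x y n0)) := by
            rw [this]; exact (CoxeterMatrix.toCoxeterSystem M).length_mul_le _ _
          have h2 : ℓ (π (alternatingWord x y n0)) ≤ n0 := by
            have := (CoxeterMatrix.toCoxeterSystem M).length_wordProd_le (alternatingWord x y n0)
            rwa [length_alternatingWord] at this
          omega
        · -- extend the alternating word with r on the left
          have hrxy : r = x ∨ r = y := by
            rcases hxy with h | h <;> (injection h with h1 h2; subst h1; subst h2) <;> tauto
          have hr' : r = (if Even (n0+1) then y else x) := by
            rcases Nat.even_or_odd n0 with he | ho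
            · rw [if_pos he] at hrF
              rw [if_neg (by simp [Nat.even_add_one, he])]
              tauto
            · have ho' : ¬ Even n0 := Nat.not_even_iff_odd.mpr ho
              rw [if_neg ho'] at hrF
              rw [if_pos (Nat.even_add_one.mpr ho')]
              tauto
          have hnext : alternatingWord x y (n0 + 2)
              = r :: alternatingWord x y (n0 + 1) := by
            rw [alternatingWord_succ' x y (n0+1), ← hr']
          refine ih (ℓ a') (by omega) a' x y (n0 + 2) hxy ?_ (by omega) rfl
          rw [hnext, wordProd_cons, cs_simple M, ← mul_assoc, ← haa, hw]

include hρ in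
theorem pos_of_ascent :
    ∀ k (w : M.Group) (i : B), ℓ w = k → ℓ (w * M.simple i) = ℓ w + 1 →
      IsPos (ρ w (sroot i)) := by
  intro k
  induction k using Nat.strong_induction_on with
  | _ k ih =>
    intro w i hk hasc
    rcases eq_or_ne w 1 with rfl | hw1
    · intro q; rw [rho_one M ρ]; exact sroot_nonneg i q
    · obtain ⟨t0, ht0⟩ := (CoxeterMatrix.toCoxeterSystem M).exists_rightDescent_of_ne_one hw1
      rw [CoxeterSystem.IsRightDescent, cs_simple M] at ht0
      have hti : i ≠ t0 := by rintro rfl; omega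
      obtain ⟨b, x', y', m, hxy', hbw, hblen, hbs, hbt⟩ :=
        dec M hti w (ℓ w) w i t0 0 (Or.inl rfl) (by simp [alternatingWord]) (by omega) rfl
      have hm : 1 ≤ m := by
        rcases Nat.eq_zero_or_pos m with rfl | h
        · simp only [alternatingWord, wordProd_nil, mul_one] at hbw
          rw [hbw] at hbt
          omega
        · exact h
      -- the pair must be (i, t0)
      have hxy'' : (x', y') = (i, t0) := by
        rcases hxy' with h | h
        · exact h
        · exfalso
          injection h with h1 h2
          rw [h1, h2] at hbw
          obtain ⟨m0, rfl⟩ : ∃ m0, m = m0 + 1 := ⟨m - 1, by omega⟩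
          have : w * M.simple i = b * π (alternatingWord i t0 m0) := by
            rw [← hbw, alternatingWord_succ, wordProd_concat, cs_simple M, mul_assoc, mul_assoc,
              ← cs_simple M, (CoxeterMatrix.toCoxeterSystem M).simple_mul_simple_self]
            rw [mul_one]
          have h1 : ℓ (w * M.simple i) ≤ ℓ b + m0 := by
            calc ℓ (w * M.simple i) ≤ ℓ b + ℓ (π (alternatingWord i t0 m0)) := by
                  rw [this]; exact (CoxeterMatrix.toCoxeterSystem M).length_mul_le _ _
              _ ≤ ℓ b + m0 := by
                  have := (CoxeterMatrix.toCoxeterSystem M).length_wordProd_le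
                    (alternatingWord i t0 m0)
                  rw [length_alternatingWord] at this
                  omega
          omega
      injection hxy'' with h1 h2
      rw [h1, h2] at hbw
      have hred : ℓ (π (alternatingWord i t0 m) * M.simple i) = m + 1 := by
        have hle : ℓ (π (alternatingWord i t0 m) * M.simple i) ≤ m + 1 := by
          have h1 : π (alternatingWord i t0 m) * M.simple i
              = π ((alternatingWord i t0 m).concat i) := by
            rw [wordProd_concat, cs_simple M]
          rw [h1]
          have := (CoxeterMatrix.toCoxeterSystem M).length_wordProd_le
            ((alternatingWord i t0 m).concat i)
          rwa [List.length_concat, length_alternatingWord] at this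
        have hge : m + 1 ≤ ℓ (π (alternatingWord i t0 m) * M.simple i) := by
          have h1 : w * M.simple i = b * (π (alternatingWord i t0 m) * M.simple i) := by
            rw [← hbw, mul_assoc]
          have h2 : ℓ (w * M.simple i) ≤ ℓ b + ℓ (π (alternatingWord i t0 m) * M.simple i) := by
            rw [h1]; exact (CoxeterMatrix.toCoxeterSystem M).length_mul_le _ _
          omega
        omega
      obtain ⟨xr, yr, hx, hy, hform⟩ := rank_two M ρ hρ hti m hred
      have hpi : IsPos (ρ b (sroot i)) := ih (ℓ b) (by omega) b i rfl hbs
      have hpt : IsPos (ρ b (sroot t0)) := ih (ℓ b) (by omega) b t0 rfl hbt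
      have hfin : ρ w (sroot i) = xr • ρ b (sroot i) + yr • ρ b (sroot t0) := by
        rw [← hbw, rho_mul M ρ, hform]
        rw [map_add, map_smul, map_smul]
      intro q
      rw [hfin]
      simp only [Pi.add_apply, Pi.smul_apply, smul_eq_mul]
      have := hpi q
      have := hpt q
      positivity

end Aux

namespace Aux

open CoxeterSystem

variable [DecidableEq B] [Fintype B] (M : CoxeterMatrix B)
  (ρ : M.Group →* Module.End ℝ (B → ℝ))
  (hρ : ∀ (s : B) (v : B → ℝ),
      ρ (M.simple s) v = v - (2 * form M v (sroot s)) • sroot s)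

local prefix:100 "ℓ" => CoxeterSystem.length (CoxeterMatrix.toCoxeterSystem M)
local prefix:100 "π" => CoxeterSystem.wordProd (CoxeterMatrix.toCoxeterSystem M)

include hρ

theorem pos_ascent (w : M.Group) (i : B) (h : ℓ (w * M.simple i) = ℓ w + 1) :
    IsPos (ρ w (sroot i)) :=
  pos_of_ascent M ρ hρ (ℓ w) w i rfl h

theorem neg_of_descent (w : M.Group) (i : B) (h : ℓ (w * M.simple i) + 1 = ℓ w) :
    IsNeg (ρ w (sroot i)) := by
  set b := w * M.simple i with hb
  have hbw : b * M.simple i = w := by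
    rw [hb, ← cs_simple M, (CoxeterMatrix.toCoxeterSystem M).simple_mul_simple_cancel_right]
  have hasc : ℓ (b * M.simple i) = ℓ b + 1 := by rw [hbw]; omega
  have hpos := pos_ascent M ρ hρ b i hasc
  have : ρ w (sroot i) = -(ρ b (sroot i)) := by
    rw [← hbw, rho_mul M ρ, rho_simple_sroot M ρ hρ, map_neg]
  rw [this]
  exact isNeg_neg hpos

theorem root_dichotomy {lam : B → ℝ} (h : IsRoot M ρ lam) : IsPos lam ∨ IsNeg lam := by
  obtain ⟨w, i, rfl⟩ := h
  rcases (CoxeterMatrix.toCoxeterSystem M).length_mul_simple w i with h1 | h1 <;>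
    rw [cs_simple M] at h1
  · exact Or.inl (pos_ascent M ρ hρ w i h1)
  · exact Or.inr (neg_of_descent M ρ hρ w i h1)

theorem eq_sroot_of_zero_off {lam : B → ℝ} (hr : IsRoot M ρ lam) (hp : IsPos lam) (s : B)
    (hz : ∀ q, q ≠ s → lam q = 0) : lam = sroot s := by
  have hl : lam = lam s • sroot s := by
    funext q
    rcases eq_or_ne q s with rfl | hqs
    · simp [sroot]
    · rw [hz q hqs]
      simp [sroot, Pi.single_eq_of_ne hqs]
  have hnorm : form M lam lam = 1 := root_norm M ρ hρ hr
  rw [hl, form_smul_left, form_smul_right, form_sroot_sroot, pairing_self] at hnorm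
  have h0 : 0 ≤ lam s := hp s
  have h1 : lam s = 1 := by nlinarith
  rw [hl, h1, one_smul]

theorem sflip {lam : B → ℝ} (hr : IsRoot M ρ lam) (hp : IsPos lam) (s : B)
    (hne : lam ≠ sroot s) : IsPos (ρ (M.simple s) lam) := by
  have hroot' : IsRoot M ρ (ρ (M.simple s) lam) := isRoot_rho M ρ hρ _ hr
  rcases root_dichotomy M ρ hρ hroot' with h | h
  · exact h
  · exfalso
    apply hne
    apply eq_sroot_of_zero_off M ρ hρ hr hp s
    intro q hqs
    have h1 : ρ (M.simple s) lam q ≤ 0 := h q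
    rw [hρ] at h1
    simp only [Pi.sub_apply, Pi.smul_apply, smul_eq_mul, sroot,
      Pi.single_eq_of_ne hqs, mul_zero, sub_zero] at h1
    exact le_antisymm h1 (hp q)

theorem rho_refl_formula (q : M.Group) (i : B) (v : B → ℝ) :
    ρ (q * M.simple i * q⁻¹) v
      = v - (2 * form M v (ρ q (sroot i))) • (ρ q (sroot i)) := by
  have hqq : ∀ u : B → ℝ, ρ q (ρ q⁻¹ u) = u := by
    intro u
    rw [← rho_mul M ρ, mul_inv_cancel, rho_one M ρ]
  rw [rho_mul M ρ, rho_mul M ρ, hρ, map_sub, map_smul, hqq]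
  have : form M (ρ q⁻¹ v) (sroot i) = form M v (ρ q (sroot i)) := by
    conv_rhs => rw [← hqq v]
    rw [form_rho M ρ hρ]
  rw [this]

theorem rho_refl_self {lam : B → ℝ} (q : M.Group) (i : B) (hq : ρ q (sroot i) = lam)
    (hr : IsRoot M ρ lam) : ρ (q * M.simple i * q⁻¹) lam = -lam := by
  rw [rho_refl_formula M ρ hρ, hq, root_norm M ρ hρ hr]
  module

theorem rho_inj : Function.Injective ρ := by
  have hker : ∀ u : M.Group, ρ u = 1 → u = 1 := by
    intro u hu
    by_contra hu1
    obtain ⟨i, hi⟩ := (CoxeterMatrix.toCoxeterSystem M).exists_rightDescent_of_ne_one hu1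
    rw [CoxeterSystem.IsRightDescent, cs_simple M] at hi
    have hdesc : ℓ (u * M.simple i) + 1 = ℓ u := by
      rcases (CoxeterMatrix.toCoxeterSystem M).length_mul_simple u i with h1 | h1 <;>
        rw [cs_simple M] at h1 <;> omega
    have := neg_of_descent M ρ hρ u i hdesc
    rw [hu] at this
    have h1 := this i
    simp only [Module.End.one_apply, sroot, Pi.single_eq_same] at h1
    norm_num at h1
  intro a b hab
  have : ρ (a * b⁻¹) = 1 := by
    rw [map_mul, hab, ← map_mul, mul_inv_cancel, map_one]
  have := hker _ this
  rw [mul_inv_eq_one] at this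
  exact this

theorem scan (ω : List B) {lam : B → ℝ} (hr : IsRoot M ρ lam) (hp : IsPos lam)
    (hneg : IsNeg (ρ (π ω)⁻¹ lam)) :
    ∃ pre j post, ω = pre ++ j :: post ∧ ρ (π pre) (sroot j) = lam := by
  induction ω generalizing lam with
  | nil =>
      exfalso
      rw [wordProd_nil, inv_one, rho_one M ρ] at hneg
      exact not_isNeg_of_isPos_root M ρ hρ hr hp hneg
  | cons i rest ih =>
      by_cases hli : lam = sroot i
      · exact ⟨[], i, rest, rfl, by rw [wordProd_nil, rho_one M ρ, hli]⟩
      · have hmuroot : IsRoot M ρ (ρ (M.simple i) lam) := isRoot_rho M ρ hρ _ hr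
        have hmupos : IsPos (ρ (M.simple i) lam) := sflip M ρ hρ hr hp i hli
        have hneg' : IsNeg (ρ (π rest)⁻¹ (ρ (M.simple i) lam)) := by
          rw [← rho_mul M ρ]
          have : (π rest)⁻¹ * M.simple i = (π (i :: rest))⁻¹ := by
            rw [wordProd_cons, mul_inv_rev, ← cs_simple M, inv_simple]
          rw [this]
          exact hneg
        obtain ⟨pre, j, post, hsplit, hpre⟩ := ih hmuroot hmupos hneg'
        refine ⟨i :: pre, j, post, by simp [hsplit], ?_⟩
        rw [wordProd_cons, cs_simple M, rho_mul M ρ, hpre, rho_simple_simple M ρ hρ]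

theorem lemmaR1 {lam : B → ℝ} (q : M.Group) (i : B) (hq : ρ q (sroot i) = lam)
    (hp : IsPos lam) (w : M.Group) (hneg : IsNeg (ρ w⁻¹ lam)) :
    ℓ ((q * M.simple i * q⁻¹) * w) + 1 ≤ ℓ w := by
  obtain ⟨ω, hred, rfl⟩ := (CoxeterMatrix.toCoxeterSystem M).exists_reduced_word' w
  obtain ⟨pre, j, post, hsplit, hpre⟩ := scan M ρ hρ ω ⟨q, i, hq⟩ hp hneg
  set r := π pre * M.simple j * (π pre)⁻¹ with hrdef
  have hrr : q * M.simple i * q⁻¹ = r := by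
    apply rho_inj M ρ hρ
    apply LinearMap.ext
    intro v
    rw [rho_refl_formula M ρ hρ, hrdef, rho_refl_formula M ρ hρ, hq, hpre]
  have hprod : r * π ω = π (pre ++ post) := by
    rw [hsplit, wordProd_append, wordProd_cons, wordProd_append, hrdef, cs_simple M]
    have h1 : π pre * M.simple j * (π pre)⁻¹ * (π pre * (M.simple j * π post))
        = π pre * (M.simple j * (M.simple j * π post)) := by group
    rw [h1, ← cs_simple M, (CoxeterMatrix.toCoxeterSystem M).simple_mul_simple_cancel_left]
  have hlen1 : ℓ (r * π ω) ≤ pre.length + post.length := by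
    rw [hprod]
    have := (CoxeterMatrix.toCoxeterSystem M).length_wordProd_le (pre ++ post)
    rwa [List.length_append] at this
  have hlen2 : ℓ (π ω) = pre.length + post.length + 1 := by
    rw [hred, hsplit]
    simp
    omega
  rw [hrr]
  omega

theorem lemmaR2 {lam : B → ℝ} (q : M.Group) (i : B) (hq : ρ q (sroot i) = lam)
    (hp : IsPos lam) (w : M.Group) (hneg : ¬ IsNeg (ρ w⁻¹ lam)) :
    ℓ w + 1 ≤ ℓ ((q * M.simple i * q⁻¹) * w) := by
  have ht : (CoxeterMatrix.toCoxeterSystem M).IsReflection (q * M.simple i * q⁻¹) := ⟨q, i, rfl⟩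
  have hneg' : IsNeg (ρ ((q * M.simple i * q⁻¹) * w)⁻¹ lam) := by
    have h1 : ((q * M.simple i * q⁻¹) * w)⁻¹ = w⁻¹ * (q * M.simple i * q⁻¹) := by
      rw [mul_inv_rev, CoxeterSystem.IsReflection.inv ht]
    rw [h1, rho_mul M ρ, rho_refl_self M ρ hρ q i hq ⟨q, i, hq⟩, map_neg]
    have hroot : IsRoot M ρ (ρ w⁻¹ lam) := isRoot_rho M ρ hρ _ ⟨q, i, hq⟩
    have hpos : IsPos (ρ w⁻¹ lam) := (root_dichotomy M ρ hρ hroot).resolve_right hneg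
    exact isNeg_neg hpos
  have h2 := lemmaR1 M ρ hρ q i hq hp ((q * M.simple i * q⁻¹) * w) hneg'
  rw [← mul_assoc, CoxeterSystem.IsReflection.mul_self ht, one_mul] at h2
  omega

theorem depth_formula {lam : B → ℝ} (q : M.Group) (i : B) (hq : ρ q (sroot i) = lam)
    (hp : IsPos lam) :
    2 * depth M ρ lam = ℓ (q * M.simple i * q⁻¹) + 1 := by
  set t := q * M.simple i * q⁻¹ with htdef
  have ht : (CoxeterMatrix.toCoxeterSystem M).IsReflection t := ⟨q, i, rfl⟩
  obtain ⟨kk, hkk⟩ := CoxeterSystem.IsReflection.odd_length ht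
  -- membership
  obtain ⟨τ, hτred, hτ⟩ := (CoxeterMatrix.toCoxeterSystem M).exists_reduced_word' t
  have hτlen : τ.length = 2 * kk + 1 := by
    have := hτred
    rw [CoxeterSystem.IsReduced, ← hτ] at this
    omega
  set u := π (τ.take kk) with hu
  set v := π (τ.drop kk) with hv
  have huv : t = u * v := by
    rw [hτ, hu, hv, ← wordProd_append, List.take_append_drop]
  have hlv : ℓ v = kk + 1 := by
    have := CoxeterSystem.IsReduced.drop hτred kk
    rw [CoxeterSystem.IsReduced] at this
    rw [hv, this, List.length_drop]
    omega
  have hlu : ℓ u ≤ kk := by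
    have := (CoxeterMatrix.toCoxeterSystem M).length_wordProd_le (τ.take kk)
    rw [List.length_take] at this
    rw [hu]
    omega
  have htv : t * v⁻¹ = u := by
    rw [huv, mul_assoc, mul_inv_cancel, mul_one]
  have hmem : IsNeg (ρ (v⁻¹)⁻¹ lam) := by
    by_contra hcon
    have := lemmaR2 M ρ hρ q i hq hp v⁻¹ hcon
    rw [htv] at this
    rw [(CoxeterMatrix.toCoxeterSystem M).length_inv] at this
    omega
  -- lower bound
  have hbound : ∀ n ∈ {n | ∃ w : M.Group, IsNeg (ρ w⁻¹ lam)
      ∧ (CoxeterMatrix.toCoxeterSystem M).length w = n}, kk + 1 ≤ n := by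
    rintro n ⟨w, hwneg, rfl⟩
    have h1 := lemmaR1 M ρ hρ q i hq hp w hwneg
    rw [← htdef] at h1
    have h2 : ℓ t ≤ ℓ (t * w) + ℓ w := by
      have := (CoxeterMatrix.toCoxeterSystem M).length_mul_le (t * w) w⁻¹
      rw [mul_inv_cancel_right, (CoxeterMatrix.toCoxeterSystem M).length_inv] at this
      omega
    omega
  have hsinf : depth M ρ lam = kk + 1 := by
    apply le_antisymm
    · apply Nat.sInf_le
      exact ⟨v⁻¹, hmem, by rw [(CoxeterMatrix.toCoxeterSystem M).length_inv]; exact hlv⟩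
    · exact le_csInf ⟨kk + 1, ⟨v⁻¹, hmem,
        by rw [(CoxeterMatrix.toCoxeterSystem M).length_inv]; exact hlv⟩⟩ hbound
  rw [hsinf]
  omega

end Aux

open Aux in
theorem statement6 [DecidableEq B] [Fintype B] (M : CoxeterMatrix B)
    (ρ : M.Group →* Module.End ℝ (B → ℝ))
    (hρ : ∀ (s : B) (v : B → ℝ),
      ρ (M.simple s) v = v - (2 * form M v (sroot s)) • sroot s)
    (lam : B → ℝ) (hlam : IsPosRoot M ρ lam) (s : B) (hne : lam ≠ sroot s)
    (hdot : 0 < form M lam (sroot s)) :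
    IsPosRoot M ρ (ρ (M.simple s) lam) ∧
      depth M ρ (ρ (M.simple s) lam) < depth M ρ lam := by
  classical
  obtain ⟨⟨q, i, hq⟩, hpos⟩ := hlam
  have hroot : IsRoot M ρ lam := ⟨q, i, hq⟩
  have hmupos : IsPos (ρ (M.simple s) lam) := sflip M ρ hρ hroot hpos s hne
  have hmuroot : IsRoot M ρ (ρ (M.simple s) lam) := isRoot_rho M ρ hρ _ hroot
  refine ⟨⟨hmuroot, hmupos⟩, ?_⟩
  have hdl : 2 * depth M ρ lam
      = (CoxeterMatrix.toCoxeterSystem M).length (q * M.simple i * q⁻¹) + 1 :=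
    depth_formula M ρ hρ q i hq hpos
  have hq' : ρ (M.simple s * q) (sroot i) = ρ (M.simple s) lam := by
    rw [rho_mul M ρ, hq]
  have hdm : 2 * depth M ρ (ρ (M.simple s) lam)
      = (CoxeterMatrix.toCoxeterSystem M).length
          ((M.simple s * q) * M.simple i * (M.simple s * q)⁻¹) + 1 :=
    depth_formula M ρ hρ _ i hq' hmupos
  have hsinv : (M.simple s)⁻¹ = M.simple s := by
    rw [← cs_simple M, (CoxeterMatrix.toCoxeterSystem M).inv_simple s]
  have hrefl_eq : (M.simple s * q) * M.simple i * (M.simple s * q)⁻¹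
      = M.simple s * ((q * M.simple i * q⁻¹) * M.simple s) := by
    rw [mul_inv_rev, hsinv]
    group
  have ht : (CoxeterMatrix.toCoxeterSystem M).IsReflection (q * M.simple i * q⁻¹) :=
    ⟨q, i, rfl⟩
  -- Step A : descent of the reflection at s
  have hformc : form M (sroot s) lam = form M lam (sroot s) := form_comm M _ _
  have hrefl_s : ρ (q * M.simple i * q⁻¹) (sroot s)
      = sroot s - (2 * form M lam (sroot s)) • lam := by
    rw [rho_refl_formula M ρ hρ, hq, hformc]
  have hnp : ¬ IsPos (ρ (q * M.simple i * q⁻¹) (sroot s)) := by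
    intro hP
    apply hne
    apply eq_sroot_of_zero_off M ρ hρ hroot hpos s
    intro q' hq's
    have h1 := hP q'
    rw [hrefl_s] at h1
    have hs0 : sroot s q' = 0 := by
      simp [sroot, Pi.single_eq_of_ne hq's]
    rw [Pi.sub_apply, Pi.smul_apply, hs0, smul_eq_mul] at h1
    have h2 := hpos q'
    have h3 : lam q' ≤ 0 := by nlinarith [hdot]
    linarith
  have hts : (CoxeterMatrix.toCoxeterSystem M).length
        ((q * M.simple i * q⁻¹) * M.simple s) + 1
      = (CoxeterMatrix.toCoxeterSystem M).length (q * M.simple i * q⁻¹) := by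
    rcases (CoxeterMatrix.toCoxeterSystem M).length_mul_simple (q * M.simple i * q⁻¹) s
      with h1 | h1 <;> rw [cs_simple M] at h1
    · exact absurd (pos_ascent M ρ hρ _ s h1) hnp
    · exact h1
  -- Step B : second descent
  have hvinv : ((q * M.simple i * q⁻¹) * M.simple s)⁻¹
      = M.simple s * (q * M.simple i * q⁻¹) := by
    rw [mul_inv_rev, hsinv, CoxeterSystem.IsReflection.inv ht]
  have hneg2 : IsNeg (ρ (((q * M.simple i * q⁻¹) * M.simple s)⁻¹) (sroot s)) := by
    rw [hvinv, rho_mul M ρ, hrefl_s, map_sub, map_smul, rho_simple_sroot M ρ hρ]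
    intro q'
    simp only [Pi.sub_apply, Pi.smul_apply, Pi.neg_apply, smul_eq_mul]
    have h1 := sroot_nonneg s q'
    have h2 := hmupos q'
    nlinarith [hdot]
  have hroot2 : IsRoot M ρ (ρ (((q * M.simple i * q⁻¹) * M.simple s)⁻¹) (sroot s)) :=
    ⟨((q * M.simple i * q⁻¹) * M.simple s)⁻¹, s, rfl⟩
  have hvs : (CoxeterMatrix.toCoxeterSystem M).length
        ((((q * M.simple i * q⁻¹) * M.simple s)⁻¹) * M.simple s) + 1
      = (CoxeterMatrix.toCoxeterSystem M).length
          (((q * M.simple i * q⁻¹) * M.simple s)⁻¹) := by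
    rcases (CoxeterMatrix.toCoxeterSystem M).length_mul_simple
        (((q * M.simple i * q⁻¹) * M.simple s)⁻¹) s with h1 | h1 <;>
      rw [cs_simple M] at h1
    · exact absurd hneg2 (fun hn =>
        not_isNeg_of_isPos_root M ρ hρ hroot2 (pos_ascent M ρ hρ _ s h1) hn)
    · exact h1
  -- translate Step B to left multiplication
  have hsv_eq : M.simple s * ((q * M.simple i * q⁻¹) * M.simple s)
      = ((((q * M.simple i * q⁻¹) * M.simple s)⁻¹) * M.simple s)⁻¹ := by
    rw [mul_inv_rev, inv_inv, hsinv]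
  have hlen_sv : (CoxeterMatrix.toCoxeterSystem M).length
        (M.simple s * ((q * M.simple i * q⁻¹) * M.simple s)) + 1
      = (CoxeterMatrix.toCoxeterSystem M).length
          ((q * M.simple i * q⁻¹) * M.simple s) := by
    rw [hsv_eq, (CoxeterMatrix.toCoxeterSystem M).length_inv]
    rw [hvs, (CoxeterMatrix.toCoxeterSystem M).length_inv]
  rw [hrefl_eq] at hdm
  omega
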